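/- Let (S^p, Σ, A) be a cuspidal, strongly Δ-connected spherical system of type A–D in which every spherical root is of type a_1 (so S^p = ∅ and Σ = S). If the system has a projective element δ ∈ A, then ⟨ρ(δ),α⟩ = 1 for every α ∈ Σ; that is, δ ∈ ⋂_{α∈Σ} A(α). -/
import Mathlib

/-!
STATEMENT 11 (Lemma 3.9 of the paper): Let `(S^p,Σ,A)` be a cuspidal strongly
Δ-connected spherical system of type A–D in which every spherical root is of type
`a_1` (so `S^p = ∅` and `Σ = S`).  If the system has a projective element `δ ∈ A`,
then `⟨ρ(δ),α⟩ = 1` for every `α ∈ Σ`, i.e. `δ ∈ ⋂_{α∈Σ} A(α)`.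

Since `Σ = S`, we record the data by the values `pair δ α = ⟨ρ(δ),α⟩` of the
functionals of the elements of `A` on the simple (= spherical) roots, together with
the Cartan pairing `c`.  Axioms (A1)–(A3) and strong Δ-connectedness (where, per
the rank-two classification, two roots of type `a_1` are strongly Δ-adjacent iff
they share a colour, i.e. `A(α) ∩ A(β) ≠ ∅`) are taken as hypotheses.
-/

theorem projective_element_of_a1_system
    {S A : Type*} [Fintype S] [Fintype A]
    (c : S → S → ℚ) (pair : A → S → ℚ)
    (hcartan_diag : ∀ α, c α α = 2)
    (hcartan_off : ∀ α β, α ≠ β → c α β ≤ 0)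
    -- axiom (A1)
    (hA1 : ∀ (δ : A) (α : S), pair δ α ≤ 1)
    -- axiom (A2): `A(α) = {δ_α^+, δ_α^-}` and `ρ(δ_α^+)+ρ(δ_α^-) = α^∨` on `Σ`
    (hA2 : ∀ α : S, ∃ δp δm : A, δp ≠ δm ∧ pair δp α = 1 ∧ pair δm α = 1 ∧
      (∀ δ : A, pair δ α = 1 → δ = δp ∨ δ = δm) ∧
      ∀ β : S, pair δp β + pair δm β = c α β)
    -- axiom (A3): `A = ⋃ A(α)`
    (hA3 : ∀ δ : A, ∃ α : S, pair δ α = 1)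
    -- strong Δ-connectedness
    (hconn : ∀ α β : S,
      Relation.ReflTransGen (fun x y : S => ∃ δ : A, pair δ x = 1 ∧ pair δ y = 1) α β)
    -- `δ` is a projective element
    (δ : A) (hproj : ∀ α : S, 0 ≤ pair δ α) :
    ∀ α : S, pair δ α = 1 := by
  obtain ⟨α₀, hα₀⟩ := hA3 δ
  intro α
  have h := hconn α₀ α
  induction h with
  | refl => exact hα₀
  | tail _ hstep ih =>
    rename_i x y _
    obtain ⟨δ', hδ'x, hδ'y⟩ := hstep
    by_cases hd : δ' = δ
    · exact hd ▸ hδ'y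
    · -- δ and δ' are the two distinct colours of A(x)
      obtain ⟨δp, δm, hne, hp1, hm1, huniq, hsum⟩ := hA2 x
      have h1 := huniq δ ih
      have h2 := huniq δ' hδ'x
      have hsy := hsum y
      have hkey : pair δ y + pair δ' y = c x y := by
        rcases h1 with h1 | h1 <;> rcases h2 with h2 | h2 <;> subst h1 <;> subst h2 <;>
          first
          | (exact absurd rfl hd)
          | linarith
      by_cases hxy : x = y
      · subst hxy
        have := hcartan_diag x
        linarith
      · have := hcartan_off x y hxy
        have := hproj y
        linarith
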